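/- Let π be a probability distribution on a finite set S of the form π(s) = exp(Σ_{ℓ∈s} w̃(ℓ))/Z over subsets s ⊆ L (independent sets), where weights satisfy w(ℓ) − g* ≤ w̃(ℓ) ≤ w(ℓ) + g* for all ℓ, with g* ≥ 0. Let w* = max_{s∈S} Σ_{ℓ∈s} w(ℓ) and suppose the maximizer s* is in S. Then Z ≥ exp(w* − |L|·g*), and for any 0 < ε < 1, π({s ∈ S : Σ_{ℓ∈s} w(ℓ) < (1−ε)w*}) ≤ 2^{|L|}·exp(2|L|·g* − ε·w*). -/

import Mathlib

open Classical in
theorem stmt_11 (L : Type*) [Fintype L]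
    (S : Finset (Finset L)) (hS : S.Nonempty)
    (w wt : L → ℝ) (gstar ε : ℝ) (hg : 0 ≤ gstar)
    (hw : ∀ ℓ, |wt ℓ - w ℓ| ≤ gstar)
    (sstar : Finset L) (hsstar : sstar ∈ S)
    (hmax : ∀ s ∈ S, ∑ ℓ ∈ s, w ℓ ≤ ∑ ℓ ∈ sstar, w ℓ)
    (hε0 : 0 < ε) (hε1 : ε < 1) :
    Real.exp ((∑ ℓ ∈ sstar, w ℓ) - (Fintype.card L : ℝ) * gstar)
      ≤ (∑ s ∈ S, Real.exp (∑ ℓ ∈ s, wt ℓ)) ∧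
    (∑ s ∈ S.filter fun s => ∑ ℓ ∈ s, w ℓ < (1 - ε) * ∑ ℓ ∈ sstar, w ℓ,
        Real.exp (∑ ℓ ∈ s, wt ℓ) / ∑ s' ∈ S, Real.exp (∑ ℓ ∈ s', wt ℓ))
      ≤ 2 ^ (Fintype.card L) *
          Real.exp (2 * (Fintype.card L : ℝ) * gstar - ε * ∑ ℓ ∈ sstar, w ℓ) := by
  have habs : ∀ s : Finset L,
      |∑ ℓ ∈ s, wt ℓ - ∑ ℓ ∈ s, w ℓ| ≤ (Fintype.card L : ℝ) * gstar := by
    intro s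
    have hcard : (s.card : ℝ) ≤ (Fintype.card L : ℝ) := by
      exact_mod_cast Finset.card_le_univ s
    calc |∑ ℓ ∈ s, wt ℓ - ∑ ℓ ∈ s, w ℓ| = |∑ ℓ ∈ s, (wt ℓ - w ℓ)| := by
          rw [Finset.sum_sub_distrib]
      _ ≤ ∑ ℓ ∈ s, |wt ℓ - w ℓ| := Finset.abs_sum_le_sum_abs _ _
      _ ≤ ∑ _ℓ ∈ s, gstar := Finset.sum_le_sum fun ℓ _ => hw ℓ
      _ = (s.card : ℝ) * gstar := by rw [Finset.sum_const, nsmul_eq_mul]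
      _ ≤ _ := mul_le_mul_of_nonneg_right hcard hg
  have hZ1 : Real.exp ((∑ ℓ ∈ sstar, w ℓ) - (Fintype.card L : ℝ) * gstar)
      ≤ ∑ s ∈ S, Real.exp (∑ ℓ ∈ s, wt ℓ) := by
    have h1 : (∑ ℓ ∈ sstar, w ℓ) - (Fintype.card L : ℝ) * gstar
        ≤ ∑ ℓ ∈ sstar, wt ℓ := by
      have := (abs_le.mp (habs sstar)).1; linarith
    calc Real.exp ((∑ ℓ ∈ sstar, w ℓ) - (Fintype.card L : ℝ) * gstar)
        ≤ Real.exp (∑ ℓ ∈ sstar, wt ℓ) := Real.exp_le_exp.mpr h1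
      _ ≤ _ := Finset.single_le_sum (f := fun s => Real.exp (∑ ℓ ∈ s, wt ℓ)) (fun s _ => (Real.exp_pos _).le) hsstar
  refine ⟨hZ1, ?_⟩
  have hterm : ∀ s ∈ S.filter (fun s => ∑ ℓ ∈ s, w ℓ < (1 - ε) * ∑ ℓ ∈ sstar, w ℓ),
      Real.exp (∑ ℓ ∈ s, wt ℓ) / (∑ s' ∈ S, Real.exp (∑ ℓ ∈ s', wt ℓ))
        ≤ Real.exp (2 * (Fintype.card L : ℝ) * gstar - ε * ∑ ℓ ∈ sstar, w ℓ) := by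
    intro s hs
    rw [Finset.mem_filter] at hs
    have h2 : ∑ ℓ ∈ s, wt ℓ
        ≤ (1 - ε) * (∑ ℓ ∈ sstar, w ℓ) + (Fintype.card L : ℝ) * gstar := by
      have := (abs_le.mp (habs s)).2; linarith [hs.2]
    calc Real.exp (∑ ℓ ∈ s, wt ℓ) / (∑ s' ∈ S, Real.exp (∑ ℓ ∈ s', wt ℓ))
        ≤ Real.exp ((1 - ε) * (∑ ℓ ∈ sstar, w ℓ) + (Fintype.card L : ℝ) * gstar)
            / Real.exp ((∑ ℓ ∈ sstar, w ℓ) - (Fintype.card L : ℝ) * gstar) := by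
          apply div_le_div₀ (Real.exp_pos _).le (Real.exp_le_exp.mpr h2)
            (Real.exp_pos _) hZ1
      _ = Real.exp (2 * (Fintype.card L : ℝ) * gstar - ε * ∑ ℓ ∈ sstar, w ℓ) := by
          rw [← Real.exp_sub]; ring_nf
  calc (∑ s ∈ S.filter fun s => ∑ ℓ ∈ s, w ℓ < (1 - ε) * ∑ ℓ ∈ sstar, w ℓ,
        Real.exp (∑ ℓ ∈ s, wt ℓ) / ∑ s' ∈ S, Real.exp (∑ ℓ ∈ s', wt ℓ))
      ≤ (S.filter fun s => ∑ ℓ ∈ s, w ℓ < (1 - ε) * ∑ ℓ ∈ sstar, w ℓ).card •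
          Real.exp (2 * (Fintype.card L : ℝ) * gstar - ε * ∑ ℓ ∈ sstar, w ℓ) :=
        Finset.sum_le_card_nsmul _ _ _ hterm
    _ ≤ (2 ^ (Fintype.card L) : ℕ) •
          Real.exp (2 * (Fintype.card L : ℝ) * gstar - ε * ∑ ℓ ∈ sstar, w ℓ) := by
        apply nsmul_le_nsmul_left (Real.exp_pos _).le
        calc (S.filter fun s => ∑ ℓ ∈ s, w ℓ < (1 - ε) * ∑ ℓ ∈ sstar, w ℓ).card
            ≤ S.card := Finset.card_filter_le _ _
          _ ≤ Fintype.card (Finset L) := Finset.card_le_univ S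
          _ = 2 ^ (Fintype.card L) := Fintype.card_finset
    _ = 2 ^ (Fintype.card L) *
          Real.exp (2 * (Fintype.card L : ℝ) * gstar - ε * ∑ ℓ ∈ sstar, w ℓ) := by
        rw [nsmul_eq_mul]; push_cast; ring
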